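/- arXiv:1701.03560 — 4 statements merged into one kernel-verified Lean document; each statement's English description precedes it below -/
import Mathlib

section
/- lim_{l → +∞} λ(l) = 1, where λ(l) = (∫₀^π cos θ e^{l cos θ} sin^{d-2} θ dθ)/(∫₀^π e^{l cos θ} sin^{d-2} θ dθ). -/
open Real intervalIntegral Filter

/-- `λ(l) → 1` as `l → +∞`. -/
theorem lambda_tendsto_one (d : ℕ) (hd : 2 ≤ d) (lam : ℝ → ℝ)
    (hlam : ∀ l : ℝ, lam l =
      (∫ θ in (0:ℝ)..Real.pi, Real.cos θ * Real.exp (l * Real.cos θ) * Real.sin θ ^ (d - 2)) /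
      (∫ θ in (0:ℝ)..Real.pi, Real.exp (l * Real.cos θ) * Real.sin θ ^ (d - 2))) :
    Filter.Tendsto lam Filter.atTop (nhds 1) := by
  have hπ := Real.pi_pos
  set f : ℝ → ℝ → ℝ := fun l θ => Real.exp (l * Real.cos θ) * Real.sin θ ^ (d - 2) with hf
  have hfc : ∀ l, Continuous (f l) := fun l => by fun_prop
  have hfint : ∀ (l a b : ℝ), IntervalIntegrable (f l) MeasureTheory.volume a b :=
    fun l a b => (hfc l).intervalIntegrable a b
  have hgc : ∀ l, Continuous (fun θ => (1 - Real.cos θ) * f l θ) := fun l => by fun_prop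
  have hgint : ∀ (l a b : ℝ),
      IntervalIntegrable (fun θ => (1 - Real.cos θ) * f l θ) MeasureTheory.volume a b :=
    fun l a b => (hgc l).intervalIntegrable a b
  have hfnn : ∀ (l θ : ℝ), θ ∈ Set.Icc (0:ℝ) π → 0 ≤ f l θ := by
    intro l θ hθ
    exact mul_nonneg (Real.exp_pos _).le
      (pow_nonneg (Real.sin_nonneg_of_nonneg_of_le_pi hθ.1 hθ.2) _)
  have hDpos : ∀ l, 0 < ∫ θ in (0:ℝ)..π, f l θ := by
    intro l
    apply intervalIntegral.intervalIntegral_pos_of_pos_on (hfint l 0 π) _ hπ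
    intro x hx
    exact mul_pos (Real.exp_pos _) (pow_pos (Real.sin_pos_of_pos_of_lt_pi hx.1 hx.2) _)
  -- lam as N/D with N = ∫ cos θ * f
  have hlam' : ∀ l, lam l =
      (∫ θ in (0:ℝ)..π, Real.cos θ * f l θ) / (∫ θ in (0:ℝ)..π, f l θ) := by
    intro l
    rw [hlam l]
    congr 1
    simp only [hf, mul_assoc]
  have hNleD : ∀ l, (∫ θ in (0:ℝ)..π, Real.cos θ * f l θ) ≤ ∫ θ in (0:ℝ)..π, f l θ := by
    intro l
    apply intervalIntegral.integral_mono_on hπ.le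
      ((Real.continuous_cos.mul (hfc l)).intervalIntegrable _ _) (hfint l 0 π)
    intro θ hθ
    calc Real.cos θ * f l θ ≤ 1 * f l θ :=
          mul_le_mul_of_nonneg_right (Real.cos_le_one θ) (hfnn l θ hθ)
      _ = f l θ := one_mul _
  have hlamle : ∀ l, lam l ≤ 1 := by
    intro l
    rw [hlam' l]
    exact div_le_one_of_le₀ (hNleD l) (hDpos l).le
  have hone_sub : ∀ l, 1 - lam l =
      (∫ θ in (0:ℝ)..π, (1 - Real.cos θ) * f l θ) / (∫ θ in (0:ℝ)..π, f l θ) := by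
    intro l
    rw [hlam' l, one_sub_div (hDpos l).ne',
      ← intervalIntegral.integral_sub (hfint l 0 π)
        (Continuous.intervalIntegrable (by fun_prop : Continuous (fun θ => Real.cos θ * f l θ)) _ _)]
    congr 1
    exact intervalIntegral.integral_congr fun θ _ => by ring
  rw [Metric.tendsto_nhds]
  intro ε hε
  -- choose δ
  set δ : ℝ := min (Real.sqrt ε) (π / 2) with hδ
  have hδ0 : 0 < δ := lt_min (Real.sqrt_pos.mpr hε) (by linarith)
  have hδπ2 : δ ≤ π / 2 := min_le_right _ _
  have hδπ : δ < π := by linarith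
  have hcosδ : 1 - Real.cos δ ≤ ε / 2 := by
    have h1 : 1 - δ ^ 2 / 2 ≤ Real.cos δ := Real.one_sub_sq_div_two_le_cos
    have h2 : δ ^ 2 ≤ ε := by
      have hle : δ ≤ Real.sqrt ε := min_le_left _ _
      have := Real.sq_sqrt hε.le
      nlinarith [Real.sqrt_nonneg ε]
    linarith
  set s : ℝ := Real.sin (δ / 2) ^ (d - 2) with hs
  have hspos : 0 < s :=
    pow_pos (Real.sin_pos_of_pos_of_lt_pi (by linarith) (by linarith)) _
  set a : ℝ := Real.cos (3 * δ / 4) - Real.cos δ with ha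
  have hapos : 0 < a := by
    have := Real.cos_lt_cos_of_nonneg_of_le_pi (by linarith : (0:ℝ) ≤ 3 * δ / 4)
      hδπ.le (by linarith : 3 * δ / 4 < δ)
    simpa [ha, sub_pos] using this
  set C : ℝ := 2 * π / (δ / 4 * s) with hC
  have hCpos : 0 < C := by
    apply div_pos (by linarith)
    positivity
  -- eventual smallness of the exponential error
  have hev : ∀ᶠ l in atTop, C * Real.exp (-(a * l)) < ε / 2 := by
    have h1 : Tendsto (fun l : ℝ => -(a * l)) atTop atBot := by
      apply Filter.tendsto_neg_atBot_iff.mpr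
      exact Filter.Tendsto.const_mul_atTop hapos tendsto_id
    have h2 : Tendsto (fun l : ℝ => C * Real.exp (-(a * l))) atTop (nhds (C * 0)) :=
      Filter.Tendsto.const_mul C (Real.tendsto_exp_atBot.comp h1)
    rw [mul_zero] at h2
    exact h2.eventually_lt_const (by linarith)
  filter_upwards [hev, eventually_ge_atTop (0:ℝ)] with l hl hl0
  -- notation for this l
  set D : ℝ := ∫ θ in (0:ℝ)..π, f l θ with hD
  set A : ℝ := ∫ θ in (0:ℝ)..δ, (1 - Real.cos θ) * f l θ with hA
  set B : ℝ := ∫ θ in δ..π, (1 - Real.cos θ) * f l θ with hB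
  have hsplit : 1 - lam l = (A + B) / D := by
    rw [hone_sub l, intervalIntegral.integral_add_adjacent_intervals
      (hgint l 0 δ) (hgint l δ π)]
  -- bound A
  have hAbound : A ≤ ε / 2 * D := by
    have h1 : A ≤ ∫ θ in (0:ℝ)..δ, ε / 2 * f l θ := by
      apply intervalIntegral.integral_mono_on hδ0.le (hgint l 0 δ)
        ((continuous_const.mul (hfc l)).intervalIntegrable _ _)
      intro θ hθ
      have hθπ : θ ∈ Set.Icc (0:ℝ) π := ⟨hθ.1, le_trans hθ.2 hδπ.le⟩
      apply mul_le_mul_of_nonneg_right _ (hfnn l θ hθπ)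
      have := Real.cos_le_cos_of_nonneg_of_le_pi hθ.1 hδπ.le hθ.2
      linarith
    have h2 : (∫ θ in (0:ℝ)..δ, ε / 2 * f l θ) = ε / 2 * ∫ θ in (0:ℝ)..δ, f l θ :=
      intervalIntegral.integral_const_mul _ _
    have h3 : (∫ θ in (0:ℝ)..δ, f l θ) ≤ D := by
      have hadd : D = (∫ θ in (0:ℝ)..δ, f l θ) + ∫ θ in δ..π, f l θ :=
        (intervalIntegral.integral_add_adjacent_intervals (hfint l 0 δ) (hfint l δ π)).symm
      have hnn : 0 ≤ ∫ θ in δ..π, f l θ := by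
        apply intervalIntegral.integral_nonneg hδπ.le
        intro θ hθ
        exact hfnn l θ ⟨le_trans hδ0.le hθ.1, hθ.2⟩
      linarith
    calc A ≤ ε / 2 * ∫ θ in (0:ℝ)..δ, f l θ := by rw [← h2]; exact h1
      _ ≤ ε / 2 * D := by
          apply mul_le_mul_of_nonneg_left h3 (by linarith)
  -- bound B from above
  have hBnn : 0 ≤ B := by
    apply intervalIntegral.integral_nonneg hδπ.le
    intro θ hθ
    have hθπ : θ ∈ Set.Icc (0:ℝ) π := ⟨le_trans hδ0.le hθ.1, hθ.2⟩
    have := Real.cos_le_one θ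
    exact mul_nonneg (by linarith) (hfnn l θ hθπ)
  have hBbound : B ≤ 2 * π * Real.exp (l * Real.cos δ) := by
    have h1 : B ≤ ∫ _θ in δ..π, 2 * Real.exp (l * Real.cos δ) := by
      apply intervalIntegral.integral_mono_on hδπ.le (hgint l δ π)
        (intervalIntegrable_const)
      intro θ hθ
      have hθπ : θ ∈ Set.Icc (0:ℝ) π := ⟨le_trans hδ0.le hθ.1, hθ.2⟩
      have hc1 : 1 - Real.cos θ ≤ 2 := by
        have := Real.neg_one_le_cos θ
        linarith
      have hfle : f l θ ≤ Real.exp (l * Real.cos δ) := by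
        have hcos : Real.cos θ ≤ Real.cos δ :=
          Real.cos_le_cos_of_nonneg_of_le_pi hδ0.le hθπ.2 hθ.1
        have hexp : Real.exp (l * Real.cos θ) ≤ Real.exp (l * Real.cos δ) :=
          Real.exp_le_exp.mpr (mul_le_mul_of_nonneg_left hcos hl0)
        have hsin : Real.sin θ ^ (d - 2) ≤ 1 :=
          pow_le_one₀ (Real.sin_nonneg_of_nonneg_of_le_pi hθπ.1 hθπ.2) (Real.sin_le_one θ)
        calc f l θ ≤ Real.exp (l * Real.cos θ) * 1 :=
              mul_le_mul_of_nonneg_left hsin (Real.exp_pos _).le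
          _ = Real.exp (l * Real.cos θ) := mul_one _
          _ ≤ Real.exp (l * Real.cos δ) := hexp
      have hfnn' := hfnn l θ hθπ
      have hcnn : 0 ≤ 1 - Real.cos θ := by
        have := Real.cos_le_one θ; linarith
      exact mul_le_mul hc1 hfle hfnn' (by norm_num)
    have h2 : (∫ _θ in δ..π, 2 * Real.exp (l * Real.cos δ)) =
        (π - δ) * (2 * Real.exp (l * Real.cos δ)) := by
      rw [intervalIntegral.integral_const]; simp [smul_eq_mul]
    calc B ≤ (π - δ) * (2 * Real.exp (l * Real.cos δ)) := by rw [← h2]; exact h1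
      _ ≤ π * (2 * Real.exp (l * Real.cos δ)) := by
          apply mul_le_mul_of_nonneg_right (by linarith) (by positivity)
      _ = 2 * π * Real.exp (l * Real.cos δ) := by ring
  -- lower bound for D
  have hm : δ / 4 * (Real.exp (l * Real.cos (3 * δ / 4)) * s) ≤ D := by
    have h1 : (∫ _θ in (δ/2)..(3*δ/4), Real.exp (l * Real.cos (3 * δ / 4)) * s)
        ≤ ∫ θ in (δ/2)..(3*δ/4), f l θ := by
      apply intervalIntegral.integral_mono_on (by linarith) intervalIntegrable_const
        (hfint l _ _)
      intro θ hθ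
      have hθ1 : δ / 2 ≤ θ := hθ.1
      have hθ2 : θ ≤ 3 * δ / 4 := hθ.2
      have hexp : Real.exp (l * Real.cos (3 * δ / 4)) ≤ Real.exp (l * Real.cos θ) := by
        apply Real.exp_le_exp.mpr
        apply mul_le_mul_of_nonneg_left _ hl0
        exact Real.cos_le_cos_of_nonneg_of_le_pi (by linarith) (by linarith) hθ2
      have hsin : Real.sin (δ / 2) ≤ Real.sin θ := by
        apply Real.strictMonoOn_sin.monotoneOn _ _ hθ1
        · constructor <;> [linarith; linarith]
        · constructor <;> [linarith; linarith]
      have hsnn : 0 ≤ Real.sin (δ / 2) :=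
        Real.sin_nonneg_of_nonneg_of_le_pi (by linarith) (by linarith)
      have hpow : s ≤ Real.sin θ ^ (d - 2) := pow_le_pow_left₀ hsnn hsin _
      exact mul_le_mul hexp hpow hspos.le (Real.exp_pos _).le
    have h2 : (∫ _θ in (δ/2)..(3*δ/4), Real.exp (l * Real.cos (3 * δ / 4)) * s)
        = δ / 4 * (Real.exp (l * Real.cos (3 * δ / 4)) * s) := by
      rw [intervalIntegral.integral_const]
      have : 3 * δ / 4 - δ / 2 = δ / 4 := by ring
      rw [smul_eq_mul, this]
    have h3 : (∫ θ in (δ/2)..(3*δ/4), f l θ) ≤ D := by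
      have e1 : (∫ θ in (0:ℝ)..(δ/2), f l θ) + (∫ θ in (δ/2)..π, f l θ) = D :=
        intervalIntegral.integral_add_adjacent_intervals (hfint l _ _) (hfint l _ _)
      have e2 : (∫ θ in (δ/2)..(3*δ/4), f l θ) + (∫ θ in (3*δ/4)..π, f l θ)
          = ∫ θ in (δ/2)..π, f l θ :=
        intervalIntegral.integral_add_adjacent_intervals (hfint l _ _) (hfint l _ _)
      have n1 : 0 ≤ ∫ θ in (0:ℝ)..(δ/2), f l θ := by
        apply intervalIntegral.integral_nonneg (by linarith)
        intro θ hθ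
        exact hfnn l θ ⟨hθ.1, by linarith [hθ.2]⟩
      have n2 : 0 ≤ ∫ θ in (3*δ/4)..π, f l θ := by
        apply intervalIntegral.integral_nonneg (by linarith)
        intro θ hθ
        exact hfnn l θ ⟨by linarith [hθ.1], hθ.2⟩
      linarith
    linarith [le_trans (le_of_eq h2.symm) (le_trans h1 h3)]
  -- put everything together
  set m : ℝ := δ / 4 * (Real.exp (l * Real.cos (3 * δ / 4)) * s) with hmdef
  have hmpos : 0 < m := by positivity
  have hBD : B / D ≤ C * Real.exp (-(a * l)) := by
    have h1 : B / D ≤ B / m := by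
      apply div_le_div_of_nonneg_left hBnn hmpos hm
    have h2 : B / m ≤ 2 * π * Real.exp (l * Real.cos δ) / m := by
      gcongr
    have h3 : 2 * π * Real.exp (l * Real.cos δ) / m = C * Real.exp (-(a * l)) := by
      rw [hmdef, hC, ha]
      rw [show -((Real.cos (3 * δ / 4) - Real.cos δ) * l)
            = l * Real.cos δ - l * Real.cos (3 * δ / 4) by ring, Real.exp_sub]
      field_simp
    calc B / D ≤ B / m := h1
      _ ≤ 2 * π * Real.exp (l * Real.cos δ) / m := h2
      _ = C * Real.exp (-(a * l)) := h3
  have hAD : A / D ≤ ε / 2 := by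
    rw [div_le_iff₀ (hDpos l)]
    calc A ≤ ε / 2 * D := hAbound
      _ = ε / 2 * D := rfl
  have hfinal : 1 - lam l < ε := by
    have : (A + B) / D = A / D + B / D := add_div _ _ _
    rw [hsplit, this]
    have := hBD.trans_lt hl
    linarith
  rw [Real.dist_eq, abs_of_nonpos (by linarith [hlamle l])]
  linarith
end

section
/- If σ/r² ≥ 1/d, then the only solution l ∈ ℝ₊ of the equation λ(l) = (σ/r²) l is l = 0; if 0 < σ/r² < 1/d, then there exists exactly one l > 0 with λ(l) = (σ/r²) l. -/
set_option maxHeartbeats 1000000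

open Real intervalIntegral MeasureTheory Set Metric

noncomputable def JJ (n : ℕ) (g : ℝ → ℝ) (l : ℝ) : ℝ :=
  ∫ θ in (0:ℝ)..Real.pi, g (Real.cos θ) * Real.exp (l * Real.cos θ) * Real.sin θ ^ n

lemma contJJ {g : ℝ → ℝ} (hg : Continuous g) (n : ℕ) (l : ℝ) :
    Continuous fun θ => g (Real.cos θ) * Real.exp (l * Real.cos θ) * Real.sin θ ^ n := by
  fun_prop

lemma intJJ {g : ℝ → ℝ} (hg : Continuous g) (n : ℕ) (l : ℝ) (a b : ℝ) :
    IntervalIntegrable (fun θ => g (Real.cos θ) * Real.exp (l * Real.cos θ) * Real.sin θ ^ n)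
      volume a b :=
  (contJJ hg n l).intervalIntegrable a b

lemma JJ_hasDerivAt {g : ℝ → ℝ} (hg : Continuous g) (n : ℕ) (M : ℝ)
    (hM : ∀ x ∈ Icc (-1:ℝ) 1, |g x| ≤ M) (l : ℝ) :
    HasDerivAt (JJ n g) (JJ n (fun x => x * g x) l) l := by
  have key := intervalIntegral.hasDerivAt_integral_of_dominated_loc_of_deriv_le
    (F := fun (x : ℝ) (θ : ℝ) => g (Real.cos θ) * Real.exp (x * Real.cos θ) * Real.sin θ ^ n)
    (F' := fun (x : ℝ) (θ : ℝ) =>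
      Real.cos θ * g (Real.cos θ) * Real.exp (x * Real.cos θ) * Real.sin θ ^ n)
    (x₀ := l) (a := 0) (b := Real.pi) (μ := volume)
    (bound := fun _ => M * Real.exp (|l| + 1))
    (s := ball l 1) (ball_mem_nhds l one_pos)
    (Filter.Eventually.of_forall fun x => (contJJ hg n x).aestronglyMeasurable)
    (intJJ hg n l 0 Real.pi)
    ((by fun_prop : Continuous fun θ => Real.cos θ * g (Real.cos θ) *
        Real.exp (l * Real.cos θ) * Real.sin θ ^ n).aestronglyMeasurable)
    ?_ (intervalIntegrable_const) ?_
  · have h2 : (∫ θ in (0:ℝ)..Real.pi,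
        Real.cos θ * g (Real.cos θ) * Real.exp (l * Real.cos θ) * Real.sin θ ^ n)
        = JJ n (fun x => x * g x) l := by
      unfold JJ
      apply intervalIntegral.integral_congr
      intro θ _
      ring
    exact h2 ▸ key.2
  · refine Filter.Eventually.of_forall fun θ _ => fun x hx => ?_
    have hc : |Real.cos θ| ≤ 1 := Real.abs_cos_le_one θ
    have hs : |Real.sin θ ^ n| ≤ 1 := by
      rw [abs_pow]
      exact pow_le_one₀ (abs_nonneg _) (Real.abs_sin_le_one θ)
    have hgb : |g (Real.cos θ)| ≤ M :=
      hM _ ⟨Real.neg_one_le_cos θ, Real.cos_le_one θ⟩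
    have hxl : |x| ≤ |l| + 1 := by
      have := mem_ball_iff_norm.mp hx
      have : |x - l| < 1 := this
      calc |x| = |x - l + l| := by ring_nf
        _ ≤ |x - l| + |l| := abs_add_le _ _
        _ ≤ |l| + 1 := by linarith
    have he : Real.exp (x * Real.cos θ) ≤ Real.exp (|l| + 1) := by
      apply Real.exp_le_exp.mpr
      calc x * Real.cos θ ≤ |x * Real.cos θ| := le_abs_self _
        _ = |x| * |Real.cos θ| := abs_mul _ _
        _ ≤ (|l| + 1) * 1 := by
            apply mul_le_mul hxl hc (abs_nonneg _) (by positivity)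
        _ = |l| + 1 := mul_one _
    have hM0 : 0 ≤ M := le_trans (abs_nonneg _) (hM 1 ⟨by norm_num, le_refl _⟩)
    calc ‖Real.cos θ * g (Real.cos θ) * Real.exp (x * Real.cos θ) * Real.sin θ ^ n‖
        = |Real.cos θ| * |g (Real.cos θ)| * Real.exp (x * Real.cos θ) * |Real.sin θ ^ n| := by
          rw [Real.norm_eq_abs, abs_mul, abs_mul, abs_mul, abs_of_pos (Real.exp_pos _)]
      _ ≤ 1 * M * Real.exp (|l| + 1) * 1 := by
          apply mul_le_mul _ hs (abs_nonneg _) (by positivity)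
          apply mul_le_mul _ he (Real.exp_pos _).le (by positivity)
          exact mul_le_mul hc hgb (abs_nonneg _) zero_le_one
      _ = M * Real.exp (|l| + 1) := by ring
  · refine Filter.Eventually.of_forall fun θ _ => fun x hx => ?_
    have h1 : HasDerivAt (fun y : ℝ => y * Real.cos θ) (Real.cos θ) x :=
      hasDerivAt_mul_const _
    have h2 := (h1.exp.const_mul (g (Real.cos θ))).mul_const (Real.sin θ ^ n)
    refine h2.congr_deriv ?_
    ring

lemma JJ_integrand_nonneg {g : ℝ → ℝ} (hg : ∀ x ∈ Icc (-1:ℝ) 1, 0 ≤ g x) (n : ℕ) (l : ℝ)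
    {θ : ℝ} (h0 : 0 ≤ θ) (h1 : θ ≤ Real.pi) :
    0 ≤ g (Real.cos θ) * Real.exp (l * Real.cos θ) * Real.sin θ ^ n := by
  apply mul_nonneg (mul_nonneg (hg _ ⟨Real.neg_one_le_cos θ, Real.cos_le_one θ⟩)
    (Real.exp_pos _).le)
  exact pow_nonneg (Real.sin_nonneg_of_nonneg_of_le_pi h0 h1) n

lemma JJ_piece_nonneg {g : ℝ → ℝ} (hg : ∀ x ∈ Icc (-1:ℝ) 1, 0 ≤ g x) (n : ℕ) (l : ℝ)
    {a b : ℝ} (h0 : 0 ≤ a) (hab : a ≤ b) (hb : b ≤ Real.pi) :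
    0 ≤ ∫ θ in a..b, g (Real.cos θ) * Real.exp (l * Real.cos θ) * Real.sin θ ^ n := by
  apply intervalIntegral.integral_nonneg hab
  intro θ hθ
  exact JJ_integrand_nonneg hg n l (h0.trans hθ.1) (hθ.2.trans hb)

lemma JJ_pos {g : ℝ → ℝ} (hg : Continuous g) (hnn : ∀ x ∈ Icc (-1:ℝ) 1, 0 ≤ g x)
    {a b : ℝ} (ha : -1 ≤ a) (hab : a < b) (hb : b ≤ 1)
    (hpos : ∀ x ∈ Ioo a b, 0 < g x) (n : ℕ) (l : ℝ) : 0 < JJ n g l := by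
  set u := Real.arccos b with hu
  set v := Real.arccos a with hv
  have hu0 : 0 ≤ u := Real.arccos_nonneg b
  have hvpi : v ≤ Real.pi := Real.arccos_le_pi a
  have hcu : Real.cos u = b := Real.cos_arccos (by linarith) hb
  have hcv : Real.cos v = a := Real.cos_arccos ha (by linarith)
  have hupi : u ≤ Real.pi := Real.arccos_le_pi b
  have hv0 : 0 ≤ v := Real.arccos_nonneg a
  have huv : u < v := by
    by_contra h
    push_neg at h
    have := Real.cos_le_cos_of_nonneg_of_le_pi hv0 hupi h
    rw [hcu, hcv] at this
    linarith
  have split1 : (∫ θ in (0:ℝ)..u, g (Real.cos θ) * Real.exp (l * Real.cos θ) * Real.sin θ ^ n)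
      + (∫ θ in u..Real.pi, g (Real.cos θ) * Real.exp (l * Real.cos θ) * Real.sin θ ^ n)
      = JJ n g l :=
    intervalIntegral.integral_add_adjacent_intervals (intJJ hg n l 0 u) (intJJ hg n l u Real.pi)
  have split2 : (∫ θ in u..v, g (Real.cos θ) * Real.exp (l * Real.cos θ) * Real.sin θ ^ n)
      + (∫ θ in v..Real.pi, g (Real.cos θ) * Real.exp (l * Real.cos θ) * Real.sin θ ^ n)
      = ∫ θ in u..Real.pi, g (Real.cos θ) * Real.exp (l * Real.cos θ) * Real.sin θ ^ n :=
    intervalIntegral.integral_add_adjacent_intervals (intJJ hg n l u v) (intJJ hg n l v Real.pi)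
  have h1 : 0 ≤ ∫ θ in (0:ℝ)..u, g (Real.cos θ) * Real.exp (l * Real.cos θ) * Real.sin θ ^ n :=
    JJ_piece_nonneg hnn n l le_rfl hu0 hupi
  have h3 : 0 ≤ ∫ θ in v..Real.pi, g (Real.cos θ) * Real.exp (l * Real.cos θ) * Real.sin θ ^ n :=
    JJ_piece_nonneg hnn n l (hu0.trans huv.le) hvpi le_rfl
  have h2 : 0 < ∫ θ in u..v, g (Real.cos θ) * Real.exp (l * Real.cos θ) * Real.sin θ ^ n := by
    apply intervalIntegral_pos_of_pos_on (intJJ hg n l u v) _ huv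
    intro θ hθ
    have hθ0 : 0 < θ := lt_of_le_of_lt hu0 hθ.1
    have hθpi : θ < Real.pi := lt_of_lt_of_le hθ.2 hvpi
    have hc1 : Real.cos θ < b := by
      rw [← hcu]
      exact Real.strictAntiOn_cos ⟨hu0, by linarith⟩ ⟨hθ0.le, hθpi.le⟩ hθ.1
    have hc2 : a < Real.cos θ := by
      rw [← hcv]
      exact Real.strictAntiOn_cos ⟨hθ0.le, hθpi.le⟩ ⟨by linarith, hvpi⟩ hθ.2
    have := hpos _ ⟨hc2, hc1⟩
    have hs : 0 < Real.sin θ := Real.sin_pos_of_pos_of_lt_pi hθ0 hθpi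
    positivity
  linarith

lemma JJ_lin (n : ℕ) (α β γ : ℝ) (l : ℝ) :
    JJ n (fun x => α * x ^ 4 + β * x ^ 2 + γ) l
      = α * JJ n (fun x => x ^ 4) l + β * JJ n (fun x => x ^ 2) l + γ * JJ n (fun _ => 1) l := by
  have h4 := (intJJ (g := fun x => x^4) (by fun_prop) n l 0 Real.pi).const_mul α
  have h2 := (intJJ (g := fun x => x^2) (by fun_prop) n l 0 Real.pi).const_mul β
  have h0 := (intJJ (g := fun _ => (1:ℝ)) (by fun_prop) n l 0 Real.pi).const_mul γ
  have key : JJ n (fun x => α * x ^ 4 + β * x ^ 2 + γ) l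
      = ∫ θ in (0:ℝ)..Real.pi,
        (α * ((Real.cos θ)^4 * Real.exp (l * Real.cos θ) * Real.sin θ ^ n)
          + (β * ((Real.cos θ)^2 * Real.exp (l * Real.cos θ) * Real.sin θ ^ n)
            + γ * (1 * Real.exp (l * Real.cos θ) * Real.sin θ ^ n))) := by
    apply intervalIntegral.integral_congr
    intro θ _
    ring
  rw [key, intervalIntegral.integral_add h4 (h2.add h0), intervalIntegral.integral_add h2 h0,
    intervalIntegral.integral_const_mul, intervalIntegral.integral_const_mul,
    intervalIntegral.integral_const_mul]
  unfold JJ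
  ring

lemma JJ_IBP (n : ℕ) (l : ℝ) :
    (n + 1 : ℝ) * JJ n (fun x => x ^ 1) l
      = l * (JJ n (fun x => x ^ 0) l - JJ n (fun x => x ^ 2) l) := by
  set f1 : ℝ → ℝ := fun θ => (Real.cos θ) ^ 1 * Real.exp (l * Real.cos θ) * Real.sin θ ^ n with hf1
  set f0 : ℝ → ℝ := fun θ => (Real.cos θ) ^ 0 * Real.exp (l * Real.cos θ) * Real.sin θ ^ n with hf0
  set f2 : ℝ → ℝ := fun θ => (Real.cos θ) ^ 2 * Real.exp (l * Real.cos θ) * Real.sin θ ^ n with hf2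
  have hD : ∀ θ ∈ uIcc (0:ℝ) Real.pi,
      HasDerivAt (fun t => Real.exp (l * Real.cos t) * Real.sin t ^ (n + 1))
        ((n + 1 : ℝ) * f1 θ - l * (f0 θ - f2 θ)) θ := by
    intro θ _
    have h1 : HasDerivAt (fun t : ℝ => l * Real.cos t) (l * (-Real.sin θ)) θ :=
      (Real.hasDerivAt_cos θ).const_mul l
    have h2 : HasDerivAt (fun t : ℝ => Real.sin t ^ (n + 1))
        ((n + 1 : ℕ) * Real.sin θ ^ n * Real.cos θ) θ := by
      have := (Real.hasDerivAt_sin θ).pow (n + 1)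
      refine this.congr_deriv ?_
      simp
    have h3 := (h1.exp.mul h2)
    refine h3.congr_deriv ?_
    symm
    have expand : Real.sin θ ^ (n + 1) * Real.sin θ = (1 - Real.cos θ ^ 2) * Real.sin θ ^ n := by
      have h4 : Real.sin θ ^ (n + 1) * Real.sin θ = Real.sin θ ^ 2 * Real.sin θ ^ n := by ring
      rw [h4, Real.sin_sq]
    simp only [hf0, hf1, hf2]
    push_cast
    linear_combination ((l : ℝ) * Real.exp (l * Real.cos θ)) * expand
  have hcont : Continuous fun θ => (n + 1 : ℝ) * f1 θ - l * (f0 θ - f2 θ) := by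
    simp only [hf0, hf1, hf2]; fun_prop
  have key := intervalIntegral.integral_eq_sub_of_hasDerivAt hD (hcont.intervalIntegrable 0 Real.pi)
  have hbound : Real.exp (l * Real.cos Real.pi) * Real.sin Real.pi ^ (n + 1)
      - Real.exp (l * Real.cos 0) * Real.sin 0 ^ (n + 1) = 0 := by
    simp [Real.sin_pi, Real.sin_zero, zero_pow (Nat.succ_ne_zero n)]
  rw [hbound] at key
  have i1 := intJJ (g := fun x => x ^ 1) (by fun_prop) n l 0 Real.pi
  have i0 := intJJ (g := fun x => x ^ 0) (by fun_prop) n l 0 Real.pi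
  have i2 := intJJ (g := fun x => x ^ 2) (by fun_prop) n l 0 Real.pi
  rw [intervalIntegral.integral_sub (i1.const_mul _) ((i0.sub i2).const_mul l),
    intervalIntegral.integral_const_mul, intervalIntegral.integral_const_mul,
    intervalIntegral.integral_sub i0 i2] at key
  have : (n + 1 : ℝ) * JJ n (fun x => x ^ 1) l
      - l * (JJ n (fun x => x ^ 0) l - JJ n (fun x => x ^ 2) l) = 0 := key
  linarith

lemma JJ_at0 (n k : ℕ) :
    JJ n (fun x => x ^ k) 0 = ∫ θ in (0:ℝ)..Real.pi, Real.cos θ ^ k * Real.sin θ ^ n := by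
  unfold JJ
  apply intervalIntegral.integral_congr
  intro θ _
  simp

lemma JJ_odd0 (n k : ℕ) (hk : Odd k) : JJ n (fun x => x ^ k) 0 = 0 := by
  rw [JJ_at0]
  have refl2 := intervalIntegral.integral_comp_sub_left (a := (0:ℝ)) (b := Real.pi)
    (fun θ => Real.cos θ ^ k * Real.sin θ ^ n) Real.pi
  simp only [sub_self, sub_zero] at refl2
  have : (∫ θ in (0:ℝ)..Real.pi, Real.cos (Real.pi - θ) ^ k * Real.sin (Real.pi - θ) ^ n)
      = ∫ θ in (0:ℝ)..Real.pi, -(Real.cos θ ^ k * Real.sin θ ^ n) := by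
    apply intervalIntegral.integral_congr
    intro θ _
    show Real.cos (Real.pi - θ) ^ k * Real.sin (Real.pi - θ) ^ n
      = -(Real.cos θ ^ k * Real.sin θ ^ n)
    rw [Real.cos_pi_sub, Real.sin_pi_sub, hk.neg_pow]
    ring
  rw [this, intervalIntegral.integral_neg] at refl2
  linarith

lemma JJ_sq_at0 (n : ℕ) :
    JJ n (fun x => x ^ 2) 0 = (1 / (n + 2 : ℝ)) * JJ n (fun x => x ^ 0) 0 := by
  rw [JJ_at0, JJ_at0]
  have hsp : (∫ θ in (0:ℝ)..Real.pi, Real.sin θ ^ (n + 2))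
      = (n + 1 : ℝ) / (n + 2) * ∫ θ in (0:ℝ)..Real.pi, Real.sin θ ^ n := by
    rw [integral_sin_pow]
    simp [Real.sin_pi, Real.sin_zero, zero_pow (Nat.succ_ne_zero n)]
  have h1 : (∫ θ in (0:ℝ)..Real.pi, Real.cos θ ^ 2 * Real.sin θ ^ n)
      = (∫ θ in (0:ℝ)..Real.pi, Real.sin θ ^ n) - ∫ θ in (0:ℝ)..Real.pi, Real.sin θ ^ (n + 2) := by
    rw [← intervalIntegral.integral_sub (by apply Continuous.intervalIntegrable; fun_prop)
      (by apply Continuous.intervalIntegrable; fun_prop)]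
    apply intervalIntegral.integral_congr
    intro θ _
    show Real.cos θ ^ 2 * Real.sin θ ^ n = Real.sin θ ^ n - Real.sin θ ^ (n + 2)
    rw [Real.cos_sq']
    ring
  have h0 : (∫ θ in (0:ℝ)..Real.pi, Real.cos θ ^ 0 * Real.sin θ ^ n)
      = ∫ θ in (0:ℝ)..Real.pi, Real.sin θ ^ n := by
    apply intervalIntegral.integral_congr; intro θ _; simp
  rw [h1, hsp, h0]
  have hn2 : (n + 2 : ℝ) ≠ 0 := by positivity
  field_simp
  ring

lemma Mk_deriv (n k : ℕ) (l : ℝ) :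
    HasDerivAt (JJ n fun x => x ^ k) (JJ n (fun x => x ^ (k + 1)) l) l := by
  have h := JJ_hasDerivAt (g := fun x => x ^ k) (by fun_prop) n 1
    (fun x hx => by
      rw [abs_pow]
      exact pow_le_one₀ (abs_nonneg _) (abs_le.mpr ⟨hx.1, hx.2⟩)) l
  apply h.congr_deriv
  unfold JJ
  apply intervalIntegral.integral_congr
  intro θ _
  show Real.cos θ * Real.cos θ ^ k * Real.exp (l * Real.cos θ) * Real.sin θ ^ n
    = Real.cos θ ^ (k + 1) * Real.exp (l * Real.cos θ) * Real.sin θ ^ n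
  ring

lemma Mk0_pos (n : ℕ) (l : ℝ) : 0 < JJ n (fun x => x ^ 0) l := by
  apply JJ_pos (by fun_prop) (fun x _ => by norm_num) (a := -1) (b := 1)
    (by norm_num) (by norm_num) (by norm_num) (fun x _ => by norm_num)

lemma one_eq_pow0 (n : ℕ) (l : ℝ) : JJ n (fun _ => (1:ℝ)) l = JJ n (fun x => x ^ 0) l := by
  unfold JJ
  apply intervalIntegral.integral_congr
  intro θ _
  norm_num

/-- `H(l) = (n+2)·M₂(l) - M₀(l) > 0` for `l > 0`. -/
lemma Hpos (n : ℕ) {l : ℝ} (hl : 0 < l) :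
    JJ n (fun x => x ^ 0) l < (n + 2 : ℝ) * JJ n (fun x => x ^ 2) l := by
  set b : ℝ := Real.sqrt (1 / (n + 2 : ℝ)) with hbdef
  have hn2 : (0:ℝ) < (n:ℝ) + 2 := by positivity
  have hb2 : b ^ 2 = 1 / (n + 2 : ℝ) := Real.sq_sqrt (by positivity)
  have hb0 : 0 < b := Real.sqrt_pos.mpr (by positivity)
  have hb2' : ((n:ℝ) + 2) * b ^ 2 = 1 := by
    rw [hb2]; field_simp
  have hb1 : b < 1 := by
    by_contra hcon
    push_neg at hcon
    nlinarith [hb0]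
  set H : ℝ → ℝ := fun t => (n + 2 : ℝ) * JJ n (fun x => x ^ 2) t - JJ n (fun x => x ^ 0) t
    with hH
  set H1 : ℝ → ℝ := fun t => (n + 2 : ℝ) * JJ n (fun x => x ^ 3) t - JJ n (fun x => x ^ 1) t
    with hH1
  set H2 : ℝ → ℝ := fun t => (n + 2 : ℝ) * JJ n (fun x => x ^ 4) t - JJ n (fun x => x ^ 2) t
    with hH2
  set χ : ℝ → ℝ := fun t => JJ n (fun x => ((n:ℝ) + 2) * (x ^ 2 - 1 / (n + 2 : ℝ)) ^ 2) t
    with hχ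
  have hHd : ∀ t, HasDerivAt H (H1 t) t := fun t =>
    ((Mk_deriv n 2 t).const_mul _).sub (by simpa using Mk_deriv n 0 t)
  have hH1d : ∀ t, HasDerivAt H1 (H2 t) t := fun t =>
    ((Mk_deriv n 3 t).const_mul _).sub (Mk_deriv n 1 t)
  have hχval : ∀ t, χ t = H2 t - (1 / (n + 2 : ℝ)) * H t := by
    intro t
    have e : (fun x : ℝ => ((n:ℝ) + 2) * (x ^ 2 - 1 / (n + 2 : ℝ)) ^ 2)
        = fun x : ℝ => ((n:ℝ) + 2) * x ^ 4 + (-2 : ℝ) * x ^ 2 + (1 / (n + 2 : ℝ)) := by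
      funext x
      field_simp
      ring
    simp only [hχ, hH, hH2]
    rw [e, JJ_lin, one_eq_pow0]
    field_simp
    ring
  have hχpos : ∀ t, 0 < χ t := by
    intro t
    apply JJ_pos (by fun_prop) (fun x _ => by positivity) (a := b) (b := 1) (by linarith)
      hb1 le_rfl
    intro x hx
    have h1 : b ^ 2 < x ^ 2 := by nlinarith [hx.1, hx.2, hb0]
    rw [hb2] at h1
    have : x ^ 2 - 1 / (n + 2 : ℝ) ≠ 0 := by linarith
    positivity
  set G : ℝ → ℝ := fun t => H1 t - b * H t with hG
  have hGd : ∀ t, HasDerivAt G (H2 t - b * H1 t) t := fun t =>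
    (hH1d t).sub ((hHd t).const_mul b)
  -- u = e^{bt} G is strictly increasing
  set u : ℝ → ℝ := fun t => Real.exp (b * t) * G t with hu
  have hud : ∀ t, HasDerivAt u (Real.exp (b * t) * χ t) t := by
    intro t
    have h1 : HasDerivAt (fun s : ℝ => Real.exp (b * s)) (b * Real.exp (b * t)) t := by
      simpa [mul_comm] using ((hasDerivAt_id t).const_mul b).exp
    have h2 := h1.mul (hGd t)
    apply h2.congr_deriv
    rw [hχval t]
    simp only [hG]
    linear_combination (-(Real.exp (b * t) * H t)) * hb2
  have humono : StrictMonoOn u (Ici 0) := by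
    apply strictMonoOn_of_deriv_pos (convex_Ici 0)
    · exact fun t _ => ((hud t).differentiableAt.continuousAt).continuousWithinAt
    · intro t _
      rw [(hud t).deriv]
      exact mul_pos (Real.exp_pos _) (hχpos t)
  have hH0 : H 0 = 0 := by
    rw [hH]
    simp only [JJ_sq_at0 n]
    field_simp
    ring
  have hH10 : H1 0 = 0 := by
    simp only [hH1]
    rw [JJ_odd0 n 3 (by decide), JJ_odd0 n 1 (by decide)]
    ring
  have hu0 : u 0 = 0 := by
    rw [hu]
    simp [hG, hH0, hH10]
  have hGpos : ∀ t, 0 < t → 0 < G t := by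
    intro t ht
    have := humono (mem_Ici.mpr le_rfl) (mem_Ici.mpr ht.le) ht
    rw [hu0] at this
    rw [hu] at this
    simp only at this
    nlinarith [Real.exp_pos (b * t)]
  -- v = e^{-bt} H is strictly increasing on [0,∞)
  set v : ℝ → ℝ := fun t => Real.exp (-(b * t)) * H t with hv
  have hvd : ∀ t, HasDerivAt v (Real.exp (-(b * t)) * G t) t := by
    intro t
    have h1 : HasDerivAt (fun s : ℝ => Real.exp (-(b * s))) (-b * Real.exp (-(b * t))) t := by
      simpa [mul_comm] using (((hasDerivAt_id t).const_mul b).neg).exp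
    have h2 := h1.mul (hHd t)
    apply h2.congr_deriv
    rw [hG]
    ring
  have hvmono : StrictMonoOn v (Ici 0) := by
    apply strictMonoOn_of_deriv_pos (convex_Ici 0)
    · exact fun t _ => ((hvd t).differentiableAt.continuousAt).continuousWithinAt
    · intro t ht
      rw [interior_Ici] at ht
      rw [(hvd t).deriv]
      exact mul_pos (Real.exp_pos _) (hGpos t ht)
  have := hvmono (mem_Ici.mpr le_rfl) (mem_Ici.mpr hl.le) hl
  simp only [hv] at this
  rw [hH0, mul_zero] at this
  simp only [hH] at this
  nlinarith [Real.exp_pos (-(b * l))]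

lemma psi_exists_unique (n : ℕ) {κ : ℝ} (hκ0 : 0 < κ) (hκ1 : κ < ((n:ℝ)+1)/((n:ℝ)+2)) :
    ∃! l : ℝ, 0 < l ∧
      (1 - κ) * JJ n (fun x => x ^ 0) l - JJ n (fun x => x ^ 2) l = 0 := by
  have hn2 : (0:ℝ) < (n:ℝ) + 2 := by positivity
  have hκ1' : κ * ((n:ℝ)+2) < (n:ℝ)+1 := (lt_div_iff₀ hn2).mp hκ1
  have hκlt1 : κ < 1 := by nlinarith
  set b : ℝ := Real.sqrt (1 - κ) with hbdef
  have hb2 : b ^ 2 = 1 - κ := Real.sq_sqrt (by linarith)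
  have hb0 : 0 < b := Real.sqrt_pos.mpr (by linarith)
  have hb1 : b < 1 := by nlinarith [hb0]
  have hbgt : 1 / ((n:ℝ)+2) < b ^ 2 := by
    rw [hb2, div_lt_iff₀ hn2]; nlinarith
  set ψ : ℝ → ℝ := fun t => b ^ 2 * JJ n (fun x => x ^ 0) t - JJ n (fun x => x ^ 2) t with hψ
  set ψ1 : ℝ → ℝ := fun t => b ^ 2 * JJ n (fun x => x ^ 1) t - JJ n (fun x => x ^ 3) t with hψ1
  set ψ2 : ℝ → ℝ := fun t => b ^ 2 * JJ n (fun x => x ^ 2) t - JJ n (fun x => x ^ 4) t with hψ2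
  have hψd : ∀ t, HasDerivAt ψ (ψ1 t) t := fun t =>
    ((Mk_deriv n 0 t).const_mul _).sub (Mk_deriv n 2 t)
  have hψ1d : ∀ t, HasDerivAt ψ1 (ψ2 t) t := fun t =>
    ((Mk_deriv n 1 t).const_mul _).sub (Mk_deriv n 3 t)
  have hψcont : Continuous ψ := by
    have : Differentiable ℝ ψ := fun t => (hψd t).differentiableAt
    exact this.continuous
  set χ : ℝ → ℝ := fun t => JJ n (fun x => (b ^ 2 - x ^ 2) ^ 2) t with hχ
  have hχval : ∀ t, χ t
      = JJ n (fun x => x ^ 4) t - 2 * b ^ 2 * JJ n (fun x => x ^ 2) t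
        + b ^ 4 * JJ n (fun x => x ^ 0) t := by
    intro t
    have e : (fun x : ℝ => (b ^ 2 - x ^ 2) ^ 2)
        = fun x : ℝ => (1:ℝ) * x ^ 4 + (-(2 * b ^ 2)) * x ^ 2 + b ^ 4 := by
      funext x; ring
    simp only [hχ]
    rw [e, JJ_lin, one_eq_pow0]
    ring
  have hχpos : ∀ t, 0 < χ t := by
    intro t
    apply JJ_pos (by fun_prop) (fun x _ => by positivity) (a := b) (b := 1) (by linarith)
      hb1 le_rfl
    intro x hx
    have h1 : b ^ 2 - x ^ 2 ≠ 0 := by nlinarith [hx.1, hx.2]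
    positivity
  have hkey : ∀ t, ψ2 t - b ^ 2 * ψ t = -χ t := by
    intro t
    rw [hχval t]
    simp only [hψ, hψ2]
    ring
  set w : ℝ → ℝ := fun t => ψ1 t + b * ψ t with hw
  have hwd : ∀ t, HasDerivAt w (ψ2 t + b * ψ1 t) t := fun t =>
    (hψ1d t).add ((hψd t).const_mul b)
  set z : ℝ → ℝ := fun t => Real.exp (-(b * t)) * w t with hz
  have hzd : ∀ t, HasDerivAt z (-(Real.exp (-(b * t)) * χ t)) t := by
    intro t
    have h1 : HasDerivAt (fun s : ℝ => Real.exp (-(b * s))) (-b * Real.exp (-(b * t))) t := by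
      simpa [mul_comm] using (((hasDerivAt_id t).const_mul b).neg).exp
    apply (h1.mul (hwd t)).congr_deriv
    have h2 := hkey t
    simp only [hw]
    linear_combination Real.exp (-(b * t)) * h2
  have hzanti : StrictAntiOn z (Ici 0) := by
    apply strictAntiOn_of_deriv_neg (convex_Ici 0)
    · exact fun t _ => ((hzd t).differentiableAt.continuousAt).continuousWithinAt
    · intro t _
      rw [(hzd t).deriv]
      have := mul_pos (Real.exp_pos (-(b * t))) (hχpos t)
      linarith
  set m : ℝ → ℝ := fun t => Real.exp (b * t) * ψ t with hm
  have hmd : ∀ t, HasDerivAt m (Real.exp (b * t) * w t) t := by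
    intro t
    have h1 : HasDerivAt (fun s : ℝ => Real.exp (b * s)) (b * Real.exp (b * t)) t := by
      simpa [mul_comm] using ((hasDerivAt_id t).const_mul b).exp
    apply (h1.mul (hψd t)).congr_deriv
    simp only [hw]
    ring
  have hψ0 : 0 < ψ 0 := by
    simp only [hψ]
    rw [JJ_sq_at0 n]
    nlinarith [Mk0_pos n 0]
  -- uniqueness
  have atmost : ∀ p q : ℝ, 0 < p → ψ p = 0 → 0 < q → ψ q = 0 → p < q → False := by
    intro p q hp hψp hq hψq hpq
    have hmp : m p = 0 := by simp only [hm]; rw [hψp, mul_zero]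
    have hmq : m q = 0 := by simp only [hm]; rw [hψq, mul_zero]
    by_cases hwp : w p ≤ 0
    · have hanti : StrictAntiOn m (Ici p) := by
        apply strictAntiOn_of_deriv_neg (convex_Ici p)
        · exact fun t _ => ((hmd t).differentiableAt.continuousAt).continuousWithinAt
        · intro t ht
          rw [interior_Ici] at ht
          rw [(hmd t).deriv]
          have hzt : z t < z p := hzanti (mem_Ici.mpr hp.le)
            (mem_Ici.mpr (hp.trans (mem_Ioi.mp ht)).le) (mem_Ioi.mp ht)
          have hzp : z p ≤ 0 := by
            simp only [hz]
            exact mul_nonpos_iff.mpr (Or.inl ⟨(Real.exp_pos _).le, hwp⟩)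
          have hwt : w t < 0 := by
            have : Real.exp (-(b * t)) * w t < 0 := lt_of_lt_of_le hzt hzp
            nlinarith [Real.exp_pos (-(b * t))]
          nlinarith [Real.exp_pos (b * t)]
      have := hanti (mem_Ici.mpr le_rfl) (mem_Ici.mpr hpq.le) hpq
      rw [hmp, hmq] at this
      exact lt_irrefl 0 this
    · push_neg at hwp
      have hmono : StrictMonoOn m (Icc 0 p) := by
        apply strictMonoOn_of_deriv_pos (convex_Icc 0 p)
        · exact Continuous.continuousOn (by
            have : Differentiable ℝ m := fun t => (hmd t).differentiableAt
            exact this.continuous)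
        · intro t ht
          rw [interior_Icc] at ht
          rw [(hmd t).deriv]
          have hzt : z p < z t := hzanti (mem_Ici.mpr ht.1.le) (mem_Ici.mpr hp.le) ht.2
          have hzp : 0 < z p := by
            simp only [hz]
            exact mul_pos (Real.exp_pos _) hwp
          have hwt : 0 < w t := by
            have : 0 < Real.exp (-(b * t)) * w t := hzp.trans hzt
            nlinarith [Real.exp_pos (-(b * t))]
          exact mul_pos (Real.exp_pos _) hwt
      have := hmono (mem_Icc.mpr ⟨le_rfl, hp.le⟩) (mem_Icc.mpr ⟨hp.le, le_rfl⟩) hp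
      rw [hmp] at this
      have hm0 : 0 < m 0 := by
        simp only [hm]
        have : Real.exp (b * 0) = 1 := by rw [mul_zero, Real.exp_zero]
        rw [this, one_mul]
        exact hψ0
      linarith
  -- existence
  set γ : ℝ := (b + 1) / 2 with hγdef
  have hγb : b < γ := by rw [hγdef]; linarith
  have hγ1 : γ < 1 := by rw [hγdef]; linarith
  have hγ0 : 0 < γ := by rw [hγdef]; linarith
  set θγ : ℝ := Real.arccos γ with hθγdef
  have hθγ0 : 0 < θγ := Real.arccos_pos.mpr hγ1
  have hθγpi : θγ ≤ Real.pi := Real.arccos_le_pi γ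
  have hcosγ : Real.cos θγ = γ := Real.cos_arccos (by linarith) hγ1.le
  set m₁ : ℝ := ∫ θ in (0:ℝ)..θγ, Real.sin θ ^ n with hm₁def
  have hm₁ : 0 < m₁ := by
    apply intervalIntegral_pos_of_pos_on
      ((by fun_prop : Continuous fun θ : ℝ => Real.sin θ ^ n).intervalIntegrable 0 θγ)
      _ hθγ0
    intro θ hθ
    have : 0 < Real.sin θ := Real.sin_pos_of_pos_of_lt_pi hθ.1 (lt_of_lt_of_le hθ.2 hθγpi)
    positivity
  have hbound : ∀ l : ℝ, 0 ≤ l →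
      ψ l ≤ (b ^ 2 - γ ^ 2) * Real.exp (l * γ) * m₁
        + b ^ 2 * Real.exp (l * b) * Real.pi := by
    intro l hl
    have hrepr : ψ l = ∫ θ in (0:ℝ)..Real.pi,
        (b ^ 2 - Real.cos θ ^ 2) * Real.exp (l * Real.cos θ) * Real.sin θ ^ n := by
      simp only [hψ, JJ]
      rw [← intervalIntegral.integral_const_mul,
        ← intervalIntegral.integral_sub
          ((intJJ (g := fun x => x ^ 0) (by fun_prop) n l 0 Real.pi).const_mul _)
          (intJJ (g := fun x => x ^ 2) (by fun_prop) n l 0 Real.pi)]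
      apply intervalIntegral.integral_congr
      intro θ _
      show b ^ 2 * (Real.cos θ ^ 0 * Real.exp (l * Real.cos θ) * Real.sin θ ^ n)
          - Real.cos θ ^ 2 * Real.exp (l * Real.cos θ) * Real.sin θ ^ n
        = (b ^ 2 - Real.cos θ ^ 2) * Real.exp (l * Real.cos θ) * Real.sin θ ^ n
      ring
    set f : ℝ → ℝ := fun θ =>
      (b ^ 2 - Real.cos θ ^ 2) * Real.exp (l * Real.cos θ) * Real.sin θ ^ n with hf
    have hfc : Continuous f := by simp only [hf]; fun_prop
    have hsplit : ψ l = (∫ θ in (0:ℝ)..θγ, f θ) + ∫ θ in θγ..Real.pi, f θ := by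
      rw [hrepr]
      exact (intervalIntegral.integral_add_adjacent_intervals
        (hfc.intervalIntegrable 0 θγ) (hfc.intervalIntegrable θγ Real.pi)).symm
    have hpart1 : (∫ θ in (0:ℝ)..θγ, f θ)
        ≤ (b ^ 2 - γ ^ 2) * Real.exp (l * γ) * m₁ := by
      have hmono := intervalIntegral.integral_mono_on (a := 0) (b := θγ) (μ := volume)
        (f := f) (g := fun θ => ((b ^ 2 - γ ^ 2) * Real.exp (l * γ)) * Real.sin θ ^ n)
        hθγ0.le (hfc.intervalIntegrable 0 θγ)
        ((by fun_prop : Continuous fun θ : ℝ =>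
          ((b ^ 2 - γ ^ 2) * Real.exp (l * γ)) * Real.sin θ ^ n).intervalIntegrable 0 θγ)
        ?_
      · rw [intervalIntegral.integral_const_mul] at hmono
        calc (∫ θ in (0:ℝ)..θγ, f θ) ≤ _ := hmono
          _ = (b ^ 2 - γ ^ 2) * Real.exp (l * γ) * m₁ := by rw [hm₁def]
      · intro θ hθ
        have hθpi : θ ≤ Real.pi := hθ.2.trans hθγpi
        have hcos : γ ≤ Real.cos θ := by
          rw [← hcosγ]
          exact Real.cos_le_cos_of_nonneg_of_le_pi hθ.1 hθγpi hθ.2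
        have h1 : b ^ 2 - Real.cos θ ^ 2 ≤ b ^ 2 - γ ^ 2 := by nlinarith
        have h2 : Real.exp (l * γ) ≤ Real.exp (l * Real.cos θ) :=
          Real.exp_le_exp.mpr (mul_le_mul_of_nonneg_left hcos hl)
        have hbγ : b ^ 2 - γ ^ 2 ≤ 0 := by nlinarith
        have hs : 0 ≤ Real.sin θ ^ n :=
          pow_nonneg (Real.sin_nonneg_of_nonneg_of_le_pi hθ.1 hθpi) n
        have hc1 : (b ^ 2 - Real.cos θ ^ 2) * Real.exp (l * Real.cos θ)
            ≤ (b ^ 2 - γ ^ 2) * Real.exp (l * Real.cos θ) :=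
          mul_le_mul_of_nonneg_right h1 (Real.exp_pos _).le
        have hc2 : (b ^ 2 - γ ^ 2) * Real.exp (l * Real.cos θ)
            ≤ (b ^ 2 - γ ^ 2) * Real.exp (l * γ) :=
          mul_le_mul_of_nonpos_left h2 hbγ
        calc f θ ≤ (b ^ 2 - γ ^ 2) * Real.exp (l * γ) * Real.sin θ ^ n :=
              mul_le_mul_of_nonneg_right (hc1.trans hc2) hs
          _ = (b ^ 2 - γ ^ 2) * Real.exp (l * γ) * Real.sin θ ^ n := rfl
    have hpart2 : (∫ θ in θγ..Real.pi, f θ) ≤ b ^ 2 * Real.exp (l * b) * Real.pi := by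
      have hmono := intervalIntegral.integral_mono_on (a := θγ) (b := Real.pi) (μ := volume)
        (f := f) (g := fun _ => b ^ 2 * Real.exp (l * b)) hθγpi
        (hfc.intervalIntegrable θγ Real.pi)
        (intervalIntegrable_const) ?_
      · rw [intervalIntegral.integral_const] at hmono
        have hsm : (Real.pi - θγ) ≤ Real.pi := by linarith
        have : (Real.pi - θγ) • (b ^ 2 * Real.exp (l * b))
            ≤ Real.pi * (b ^ 2 * Real.exp (l * b)) := by
          rw [smul_eq_mul]
          apply mul_le_mul_of_nonneg_right hsm (by positivity)
        calc (∫ θ in θγ..Real.pi, f θ) ≤ _ := hmono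
          _ ≤ Real.pi * (b ^ 2 * Real.exp (l * b)) := this
          _ = b ^ 2 * Real.exp (l * b) * Real.pi := by ring
      · intro θ hθ
        show f θ ≤ b ^ 2 * Real.exp (l * b)
        by_cases hcc : b ^ 2 - Real.cos θ ^ 2 ≤ 0
        · have hs : 0 ≤ Real.sin θ ^ n :=
            pow_nonneg (Real.sin_nonneg_of_nonneg_of_le_pi (hθγ0.le.trans hθ.1) hθ.2) n
          have : f θ ≤ 0 := by
            simp only [hf]
            have := mul_nonneg (Real.exp_pos (l * Real.cos θ)).le hs
            nlinarith
          have : (0:ℝ) ≤ b ^ 2 * Real.exp (l * b) := by positivity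
          linarith
        · push_neg at hcc
          have hcb : Real.cos θ ≤ b := by nlinarith [hb0]
          have he : Real.exp (l * Real.cos θ) ≤ Real.exp (l * b) :=
            Real.exp_le_exp.mpr (mul_le_mul_of_nonneg_left hcb hl)
          have hsin0 : 0 ≤ Real.sin θ :=
            Real.sin_nonneg_of_nonneg_of_le_pi (hθγ0.le.trans hθ.1) hθ.2
          have hs1 : Real.sin θ ^ n ≤ 1 :=
            pow_le_one₀ hsin0 (Real.sin_le_one θ)
          have hs0 : 0 ≤ Real.sin θ ^ n := pow_nonneg hsin0 n
          have hbb : b ^ 2 - Real.cos θ ^ 2 ≤ b ^ 2 := by nlinarith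
          calc f θ ≤ (b ^ 2 - Real.cos θ ^ 2) * Real.exp (l * Real.cos θ) * 1 := by
                simp only [hf]
                exact mul_le_mul_of_nonneg_left hs1
                  (mul_nonneg hcc.le (Real.exp_pos _).le)
            _ = (b ^ 2 - Real.cos θ ^ 2) * Real.exp (l * Real.cos θ) := by ring
            _ ≤ b ^ 2 * Real.exp (l * Real.cos θ) :=
                mul_le_mul_of_nonneg_right hbb (Real.exp_pos _).le
            _ ≤ b ^ 2 * Real.exp (l * b) :=
                mul_le_mul_of_nonneg_left he (by positivity)
    linarith [hsplit]
  -- choose L with ψ L < 0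
  set K : ℝ := Real.pi * b ^ 2 / ((γ ^ 2 - b ^ 2) * m₁) with hKdef
  have hγ2b2 : 0 < γ ^ 2 - b ^ 2 := by nlinarith
  have hK : 0 < K := by
    rw [hKdef]
    have : (0:ℝ) < Real.pi := Real.pi_pos
    positivity
  set L : ℝ := max 1 ((Real.log K + 1) / (γ - b)) with hLdef
  have hL1 : (1:ℝ) ≤ L := le_max_left _ _
  have hL0 : 0 < L := by linarith
  have hLK : Real.log K + 1 ≤ L * (γ - b) := by
    have h1 : (Real.log K + 1) / (γ - b) ≤ L := le_max_right _ _
    have h2 : 0 < γ - b := by linarith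
    calc Real.log K + 1 = ((Real.log K + 1) / (γ - b)) * (γ - b) := by field_simp
      _ ≤ L * (γ - b) := mul_le_mul_of_nonneg_right h1 h2.le
  have hKexp : K < Real.exp (L * (γ - b)) := by
    calc K = Real.exp (Real.log K) := (Real.exp_log hK).symm
      _ < Real.exp (Real.log K + 1) := Real.exp_lt_exp.mpr (by linarith)
      _ ≤ Real.exp (L * (γ - b)) := Real.exp_le_exp.mpr hLK
  have hψL : ψ L < 0 := by
    have hb1' := hbound L hL0.le
    have hexpsplit : Real.exp (L * γ) = Real.exp (L * b) * Real.exp (L * (γ - b)) := by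
      rw [← Real.exp_add]
      congr 1
      ring
    have hKeq : (γ ^ 2 - b ^ 2) * m₁ * K = Real.pi * b ^ 2 := by
      rw [hKdef]
      field_simp
    have hstep : b ^ 2 * Real.exp (L * b) * Real.pi
        < (γ ^ 2 - b ^ 2) * Real.exp (L * γ) * m₁ := by
      rw [hexpsplit]
      have e1 : (γ ^ 2 - b ^ 2) * (Real.exp (L * b) * Real.exp (L * (γ - b))) * m₁
          = ((γ ^ 2 - b ^ 2) * m₁ * Real.exp (L * (γ - b))) * Real.exp (L * b) := by ring
      have e2 : b ^ 2 * Real.exp (L * b) * Real.pi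
          = (Real.pi * b ^ 2) * Real.exp (L * b) := by ring
      rw [e1, e2, ← hKeq]
      apply mul_lt_mul_of_pos_right _ (Real.exp_pos _)
      have hmm : 0 < (γ ^ 2 - b ^ 2) * m₁ := mul_pos hγ2b2 hm₁
      calc (γ ^ 2 - b ^ 2) * m₁ * K
          < (γ ^ 2 - b ^ 2) * m₁ * Real.exp (L * (γ - b)) :=
            mul_lt_mul_of_pos_left hKexp hmm
        _ = (γ ^ 2 - b ^ 2) * m₁ * Real.exp (L * (γ - b)) := rfl
    nlinarith [hb1']
  -- IVT
  have hivt : ∃ l₀ ∈ Ioo (0:ℝ) L, ψ l₀ = 0 := by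
    have h0 := intermediate_value_Ioo' (le_of_lt hL0) hψcont.continuousOn
      (a := 0) (b := L)
    have hmem : (0:ℝ) ∈ Ioo (ψ L) (ψ 0) := ⟨hψL, hψ0⟩
    obtain ⟨l₀, hl₀, hval⟩ := h0 hmem
    exact ⟨l₀, hl₀, hval⟩
  obtain ⟨l₀, hl₀mem, hl₀⟩ := hivt
  have hconv : ∀ t : ℝ, ((1 - κ) * JJ n (fun x => x ^ 0) t - JJ n (fun x => x ^ 2) t = 0)
      ↔ ψ t = 0 := by
    intro t
    simp only [hψ]
    rw [hb2]
  refine ⟨l₀, ⟨hl₀mem.1, (hconv l₀).mpr hl₀⟩, ?_⟩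
  intro y hy
  rw [hconv y] at hy
  rcases lt_trichotomy y l₀ with h | h | h
  · exact absurd (atmost y l₀ hy.1 hy.2 hl₀mem.1 hl₀ h) (fun hf => hf)
  · exact h
  · exact absurd (atmost l₀ y hl₀mem.1 hl₀ hy.1 hy.2 h) (fun hf => hf)

/-- If `σ/r² ≥ 1/d` the only solution `l ≥ 0` of `λ(l) = (σ/r²) l` is `l = 0`;
if `0 < σ/r² < 1/d` there is exactly one `l > 0` with `λ(l) = (σ/r²) l`. -/
theorem lambda_fixed_points (d : ℕ) (hd : 2 ≤ d) (σ r : ℝ) (hσ : 0 < σ) (hr : 0 < r)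
    (lam : ℝ → ℝ)
    (hlam : ∀ l : ℝ, lam l =
      (∫ θ in (0:ℝ)..Real.pi, Real.cos θ * Real.exp (l * Real.cos θ) * Real.sin θ ^ (d - 2)) /
      (∫ θ in (0:ℝ)..Real.pi, Real.exp (l * Real.cos θ) * Real.sin θ ^ (d - 2))) :
    (σ / r ^ 2 ≥ 1 / (d : ℝ) →
      ∀ l : ℝ, 0 ≤ l → lam l = σ / r ^ 2 * l → l = 0) ∧
    (σ / r ^ 2 < 1 / (d : ℝ) →
      ∃! l : ℝ, 0 < l ∧ lam l = σ / r ^ 2 * l) := by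
  obtain ⟨n, rfl⟩ : ∃ n, d = n + 2 := ⟨d - 2, (Nat.sub_add_cancel hd).symm⟩
  simp only [Nat.add_sub_cancel] at hlam
  set c : ℝ := σ / r ^ 2 with hcdef
  have hc : 0 < c := div_pos hσ (pow_pos hr 2)
  have hdcast : ((n + 2 : ℕ) : ℝ) = (n : ℝ) + 2 := by push_cast; ring
  have hn2 : (0:ℝ) < (n:ℝ) + 2 := by positivity
  have hlam' : ∀ l, lam l = JJ n (fun x => x ^ 1) l / JJ n (fun x => x ^ 0) l := by
    intro l
    rw [hlam l]
    unfold JJ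
    congr 1
    · apply intervalIntegral.integral_congr
      intro θ _
      show Real.cos θ * Real.exp (l * Real.cos θ) * Real.sin θ ^ n
        = Real.cos θ ^ 1 * Real.exp (l * Real.cos θ) * Real.sin θ ^ n
      ring
    · apply intervalIntegral.integral_congr
      intro θ _
      show Real.exp (l * Real.cos θ) * Real.sin θ ^ n
        = Real.cos θ ^ 0 * Real.exp (l * Real.cos θ) * Real.sin θ ^ n
      ring
  constructor
  · -- part 1
    intro hge l hl0 heq
    by_contra hne
    have hl : 0 < l := lt_of_le_of_ne hl0 (Ne.symm hne)
    have A := Mk0_pos n l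
    have hBA : JJ n (fun x => x ^ 1) l = c * l * JJ n (fun x => x ^ 0) l := by
      rw [hlam'] at heq
      exact (div_eq_iff (ne_of_gt A)).mp heq
    have hIBP := JJ_IBP n l
    have hH := Hpos n (l := l) hl
    have hge1 : 1 ≤ c * ((n:ℝ) + 2) := by
      rw [ge_iff_le, hdcast, div_le_iff₀ hn2] at hge
      linarith
    have e1 : l * JJ n (fun x => x ^ 2) l
        = l * JJ n (fun x => x ^ 0) l - ((n:ℝ)+1) * c * (l * JJ n (fun x => x ^ 0) l) := by
      linear_combination hIBP - ((n:ℝ)+1) * hBA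
    have hF : l * JJ n (fun x => x ^ 0) l < ((n:ℝ)+2) * (l * JJ n (fun x => x ^ 2) l) := by
      nlinarith [hH, hl]
    have hu : 0 < l * JJ n (fun x => x ^ 0) l := mul_pos hl A
    have hprod : ((n:ℝ)+1) * (l * JJ n (fun x => x ^ 0) l)
        ≤ ((n:ℝ)+1) * (l * JJ n (fun x => x ^ 0) l) * (c * ((n:ℝ)+2)) := by
      have hX : (0:ℝ) ≤ ((n:ℝ)+1) * (l * JJ n (fun x => x ^ 0) l) := by positivity
      have := mul_le_mul_of_nonneg_left hge1 hX
      linarith [this]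
    nlinarith [hF, e1, hprod]
  · -- part 2
    intro hlt
    rw [hdcast] at hlt
    have hκ0 : 0 < c * ((n:ℝ)+1) := by positivity
    have hκ1 : c * ((n:ℝ)+1) < ((n:ℝ)+1)/((n:ℝ)+2) := by
      rw [lt_div_iff₀ hn2]
      rw [lt_div_iff₀ hn2] at hlt
      nlinarith
    obtain ⟨l₀, ⟨hpos, hroot⟩, huniq⟩ := psi_exists_unique n hκ0 hκ1
    have equiv : ∀ y : ℝ, 0 < y → (lam y = c * y ↔
        (1 - c * ((n:ℝ)+1)) * JJ n (fun x => x ^ 0) y - JJ n (fun x => x ^ 2) y = 0) := by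
      intro y hy
      have A := Mk0_pos n y
      have hIBP := JJ_IBP n y
      constructor
      · intro heq
        have hBA : JJ n (fun x => x ^ 1) y = c * y * JJ n (fun x => x ^ 0) y := by
          rw [hlam'] at heq
          exact (div_eq_iff (ne_of_gt A)).mp heq
        have hz : y * ((1 - c * ((n:ℝ)+1)) * JJ n (fun x => x ^ 0) y
            - JJ n (fun x => x ^ 2) y) = 0 := by
          linear_combination ((n:ℝ)+1) * hBA - hIBP
        rcases mul_eq_zero.mp hz with h | h
        · exact absurd h (ne_of_gt hy)
        · exact h
      · intro hroot'
        have hBA : ((n:ℝ)+1) * JJ n (fun x => x ^ 1) y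
            = ((n:ℝ)+1) * (c * y * JJ n (fun x => x ^ 0) y) := by
          linear_combination hIBP + y * hroot'
        have hn1 : ((n:ℝ)+1) ≠ 0 := by positivity
        have hBA' : JJ n (fun x => x ^ 1) y = c * y * JJ n (fun x => x ^ 0) y :=
          mul_left_cancel₀ hn1 hBA
        rw [hlam' y, hBA', mul_div_assoc, div_self (ne_of_gt A), mul_one]
    exact ⟨l₀, ⟨hpos, (equiv l₀ hpos).mpr hroot⟩,
      fun y hy => huniq y ⟨hy.1, (equiv y hy.1).mp hy.2⟩⟩
end

section
/- For every l > 0, μ(l) < λ(l), where μ(l) = 2l/(√(d² + 4l²) + d) and λ(l) = (∫₀^π cos θ e^{l cos θ} sin^{d-2} θ dθ)/(∫₀^π e^{l cos θ} sin^{d-2} θ dθ). -/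
open Real intervalIntegral Set

lemma cheb_strict {a b : ℝ} (hab : a < b) {u v ρ : ℝ → ℝ}
    (hu : Continuous u) (hv : Continuous v) (hρ : Continuous ρ)
    (hρpos : ∀ x ∈ Set.Ioo a b, 0 < ρ x)
    (hmono : ∀ x ∈ Set.Ioo a b, ∀ y ∈ Set.Ioo a b, x < y → u y < u x ∧ v x < v y) :
    (∫ x in a..b, u x * v x * ρ x) * (∫ x in a..b, ρ x) <
      (∫ x in a..b, u x * ρ x) * (∫ x in a..b, v x * ρ x) := by
  set Suv := ∫ x in a..b, u x * v x * ρ x with hSuv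
  set S1 := ∫ x in a..b, ρ x with hS1
  set Su := ∫ x in a..b, u x * ρ x with hSu
  set Sv := ∫ x in a..b, v x * ρ x with hSv
  have hiuvρ : ∀ c d : ℝ, IntervalIntegrable (fun x => u x * v x * ρ x) MeasureTheory.volume c d :=
    fun c d => ((hu.mul hv).mul hρ).intervalIntegrable c d
  have hiρ : ∀ c d : ℝ, IntervalIntegrable ρ MeasureTheory.volume c d :=
    fun c d => hρ.intervalIntegrable c d
  have hiuρ : ∀ c d : ℝ, IntervalIntegrable (fun x => u x * ρ x) MeasureTheory.volume c d :=
    fun c d => (hu.mul hρ).intervalIntegrable c d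
  have hivρ : ∀ c d : ℝ, IntervalIntegrable (fun x => v x * ρ x) MeasureTheory.volume c d :=
    fun c d => (hv.mul hρ).intervalIntegrable c d
  -- the quadratic form G y
  have hGval : ∀ y : ℝ, ∀ c d : ℝ, (∫ x in c..d, (u x - u y) * (v x - v y) * ρ x)
      = (∫ x in c..d, u x * v x * ρ x) - u y * (∫ x in c..d, v x * ρ x)
        - v y * (∫ x in c..d, u x * ρ x) + u y * v y * (∫ x in c..d, ρ x) := by
    intro y c d
    have : (fun x => (u x - u y) * (v x - v y) * ρ x)
        = fun x => (u x * v x * ρ x - u y * (v x * ρ x)) - v y * (u x * ρ x)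
            + (u y * v y) * ρ x := by funext x; ring
    rw [this, intervalIntegral.integral_add (((hiuvρ c d).sub ((hivρ c d).const_mul _)).sub
      ((hiuρ c d).const_mul _)) ((hiρ c d).const_mul _),
      intervalIntegral.integral_sub ((hiuvρ c d).sub ((hivρ c d).const_mul _))
      ((hiuρ c d).const_mul _),
      intervalIntegral.integral_sub (hiuvρ c d) ((hivρ c d).const_mul _),
      intervalIntegral.integral_const_mul, intervalIntegral.integral_const_mul,
      intervalIntegral.integral_const_mul]
  have hG : ∀ y ∈ Set.Ioo a b, Suv - u y * Sv - v y * Su + u y * v y * S1 < 0 := by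
    intro y hy
    rw [← hGval y a b]
    have hsplit : (∫ x in a..y, (u x - u y) * (v x - v y) * ρ x)
        + (∫ x in y..b, (u x - u y) * (v x - v y) * ρ x)
        = ∫ x in a..b, (u x - u y) * (v x - v y) * ρ x :=
      intervalIntegral.integral_add_adjacent_intervals
        ((((hu.sub continuous_const).mul (hv.sub continuous_const)).mul hρ).intervalIntegrable a y)
        ((((hu.sub continuous_const).mul (hv.sub continuous_const)).mul hρ).intervalIntegrable y b)
    rw [← hsplit]
    have h1 : 0 < ∫ x in a..y, -((u x - u y) * (v x - v y) * ρ x) := by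
      apply intervalIntegral.intervalIntegral_pos_of_pos_on
        ((((hu.sub continuous_const).mul (hv.sub continuous_const)).mul hρ).neg.intervalIntegrable a y)
      · intro x hx
        have hx' : x ∈ Set.Ioo a b := ⟨hx.1, hx.2.trans hy.2⟩
        obtain ⟨h1, h2⟩ := hmono x hx' y hy hx.2
        have hρx := hρpos x hx'
        show 0 < -((u x - u y) * (v x - v y) * ρ x)
        nlinarith [mul_pos (mul_pos (sub_pos.mpr h1) (sub_pos.mpr h2)) hρx]
      · exact hy.1
    have h2 : 0 < ∫ x in y..b, -((u x - u y) * (v x - v y) * ρ x) := by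
      apply intervalIntegral.intervalIntegral_pos_of_pos_on
        ((((hu.sub continuous_const).mul (hv.sub continuous_const)).mul hρ).neg.intervalIntegrable y b)
      · intro x hx
        have hx' : x ∈ Set.Ioo a b := ⟨hy.1.trans hx.1, hx.2⟩
        obtain ⟨h1, h2⟩ := hmono y hy x hx' hx.1
        have hρx := hρpos x hx'
        show 0 < -((u x - u y) * (v x - v y) * ρ x)
        nlinarith [mul_pos (mul_pos (sub_pos.mpr h1) (sub_pos.mpr h2)) hρx]
      · exact hy.2
    rw [intervalIntegral.integral_neg] at h1 h2
    linarith
  -- integrate G against ρ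
  have hE : (∫ y in a..b, (Suv - u y * Sv - v y * Su + u y * v y * S1) * ρ y)
      = 2 * (Suv * S1 - Su * Sv) := by
    have : (fun y => (Suv - u y * Sv - v y * Su + u y * v y * S1) * ρ y)
        = fun y => ((Suv * ρ y - Sv * (u y * ρ y)) - Su * (v y * ρ y))
            + S1 * (u y * v y * ρ y) := by funext y; ring
    rw [this, intervalIntegral.integral_add ((((hiρ a b).const_mul _).sub
      ((hiuρ a b).const_mul _)).sub ((hivρ a b).const_mul _)) ((hiuvρ a b).const_mul _),
      intervalIntegral.integral_sub (((hiρ a b).const_mul _).sub ((hiuρ a b).const_mul _))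
      ((hivρ a b).const_mul _),
      intervalIntegral.integral_sub ((hiρ a b).const_mul _) ((hiuρ a b).const_mul _),
      intervalIntegral.integral_const_mul, intervalIntegral.integral_const_mul,
      intervalIntegral.integral_const_mul, intervalIntegral.integral_const_mul]
    rw [← hSuv, ← hS1, ← hSu, ← hSv]; ring
  have hEneg : 0 < ∫ y in a..b, -((Suv - u y * Sv - v y * Su + u y * v y * S1) * ρ y) := by
    apply intervalIntegral.intervalIntegral_pos_of_pos_on
    · exact (((((continuous_const.sub (hu.mul continuous_const)).sub
        (hv.mul continuous_const)).add ((hu.mul hv).mul continuous_const)).mul hρ).neg).intervalIntegrable a b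
    · intro y hy
      have := hG y hy
      have := hρpos y hy
      nlinarith
    · exact hab
  rw [intervalIntegral.integral_neg, hE] at hEneg
  linarith

/-- For every `l > 0`, `μ(l) < λ(l)`. -/
theorem mu_lt_lambda (d : ℕ) (hd : 2 ≤ d) (μ lam : ℝ → ℝ)
    (hμ : ∀ l : ℝ, μ l = 2 * l / (Real.sqrt ((d : ℝ) ^ 2 + 4 * l ^ 2) + d))
    (hlam : ∀ l : ℝ, lam l =
      (∫ θ in (0:ℝ)..Real.pi, Real.cos θ * Real.exp (l * Real.cos θ) * Real.sin θ ^ (d - 2)) /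
      (∫ θ in (0:ℝ)..Real.pi, Real.exp (l * Real.cos θ) * Real.sin θ ^ (d - 2))) :
    ∀ l : ℝ, 0 < l → μ l < lam l := by
  obtain ⟨n, rfl⟩ := Nat.exists_eq_add_of_le hd
  intro l hl
  rw [hμ l, hlam l, show 2 + n - 2 = n from by omega]
  set D := ∫ θ in (0:ℝ)..π, exp (l * cos θ) * sin θ ^ n with hD_def
  set N := ∫ θ in (0:ℝ)..π, cos θ * exp (l * cos θ) * sin θ ^ n with hN_def
  set S := ∫ θ in (0:ℝ)..π, sin θ ^ 2 * (exp (l * cos θ) * sin θ ^ n) with hS_def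
  set M := ∫ θ in (0:ℝ)..π, cos θ * sin θ ^ 2 * (exp (l * cos θ) * sin θ ^ n) with hM_def
  set C := ∫ θ in (0:ℝ)..π, cos θ ^ 2 * (exp (l * cos θ) * sin θ ^ n) with hC_def
  have cw : Continuous fun θ : ℝ => exp (l * cos θ) * sin θ ^ n := by fun_prop
  have cN : Continuous fun θ : ℝ => cos θ * exp (l * cos θ) * sin θ ^ n := by fun_prop
  have cS : Continuous fun θ : ℝ => sin θ ^ 2 * (exp (l * cos θ) * sin θ ^ n) := by fun_prop
  have cM : Continuous fun θ : ℝ => cos θ * sin θ ^ 2 * (exp (l * cos θ) * sin θ ^ n) := by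
    fun_prop
  have cC : Continuous fun θ : ℝ => cos θ ^ 2 * (exp (l * cos θ) * sin θ ^ n) := by fun_prop
  -- positivity of D and S
  have hDpos : 0 < D := by
    rw [hD_def]
    apply intervalIntegral.intervalIntegral_pos_of_pos_on (cw.intervalIntegrable 0 π)
    · intro x hx
      have hs := Real.sin_pos_of_pos_of_lt_pi hx.1 hx.2
      positivity
    · exact Real.pi_pos
  have hSpos : 0 < S := by
    rw [hS_def]
    apply intervalIntegral.intervalIntegral_pos_of_pos_on (cS.intervalIntegrable 0 π)
    · intro x hx
      have hs := Real.sin_pos_of_pos_of_lt_pi hx.1 hx.2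
      positivity
    · exact Real.pi_pos
  -- first integration by parts identity
  have E1 : l * S - ((n : ℝ) + 1) * N = 0 := by
    have hder : ∀ θ ∈ Set.uIcc (0:ℝ) π,
        HasDerivAt (fun x => -(sin x ^ (n+1) * exp (l * cos x)))
        (l * (sin θ ^ 2 * (exp (l * cos θ) * sin θ ^ n))
          - ((n : ℝ) + 1) * (cos θ * exp (l * cos θ) * sin θ ^ n)) θ := by
      intro θ _
      have h1 : HasDerivAt (fun x : ℝ => sin x ^ (n+1))
          (((n : ℝ) + 1) * sin θ ^ n * cos θ) θ := by
        simpa using (Real.hasDerivAt_sin θ).fun_pow (n+1)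
      have h2 : HasDerivAt (fun x : ℝ => exp (l * cos x))
          (exp (l * cos θ) * (l * -sin θ)) θ :=
        ((Real.hasDerivAt_cos θ).const_mul l).exp
      have h3 := (h1.fun_mul h2).fun_neg
      refine h3.congr_deriv ?_
      ring
    calc l * S - ((n : ℝ) + 1) * N
        = ∫ θ in (0:ℝ)..π, (l * (sin θ ^ 2 * (exp (l * cos θ) * sin θ ^ n))
            - ((n : ℝ) + 1) * (cos θ * exp (l * cos θ) * sin θ ^ n)) := by
          rw [intervalIntegral.integral_sub ((continuous_const.fun_mul cS).intervalIntegrable 0 π)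
            ((continuous_const.fun_mul cN).intervalIntegrable 0 π),
            intervalIntegral.integral_const_mul, intervalIntegral.integral_const_mul,
            ← hS_def, ← hN_def]
      _ = -(sin π ^ (n+1) * exp (l * cos π)) - -(sin 0 ^ (n+1) * exp (l * cos 0)) :=
          intervalIntegral.integral_eq_sub_of_hasDerivAt hder
            (Continuous.intervalIntegrable (by fun_prop) 0 π)
      _ = 0 := by simp
  -- second integration by parts identity
  have E2 : S + l * M - ((n : ℝ) + 1) * C = 0 := by
    have hder : ∀ θ ∈ Set.uIcc (0:ℝ) π,
        HasDerivAt (fun x => -(cos x * sin x ^ (n+1) * exp (l * cos x)))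
        (sin θ ^ 2 * (exp (l * cos θ) * sin θ ^ n)
          + l * (cos θ * sin θ ^ 2 * (exp (l * cos θ) * sin θ ^ n))
          - ((n : ℝ) + 1) * (cos θ ^ 2 * (exp (l * cos θ) * sin θ ^ n))) θ := by
      intro θ _
      have h1 : HasDerivAt (fun x : ℝ => sin x ^ (n+1))
          (((n : ℝ) + 1) * sin θ ^ n * cos θ) θ := by
        simpa using (Real.hasDerivAt_sin θ).fun_pow (n+1)
      have h0 : HasDerivAt (fun x : ℝ => cos x * sin x ^ (n+1))
          (-sin θ * sin θ ^ (n+1) + cos θ * (((n : ℝ) + 1) * sin θ ^ n * cos θ)) θ :=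
        (Real.hasDerivAt_cos θ).mul h1
      have h2 : HasDerivAt (fun x : ℝ => exp (l * cos x))
          (exp (l * cos θ) * (l * -sin θ)) θ :=
        ((Real.hasDerivAt_cos θ).const_mul l).exp
      have h3 := (h0.fun_mul h2).fun_neg
      refine h3.congr_deriv ?_
      ring
    calc S + l * M - ((n : ℝ) + 1) * C
        = ∫ θ in (0:ℝ)..π, (sin θ ^ 2 * (exp (l * cos θ) * sin θ ^ n)
            + l * (cos θ * sin θ ^ 2 * (exp (l * cos θ) * sin θ ^ n))
            - ((n : ℝ) + 1) * (cos θ ^ 2 * (exp (l * cos θ) * sin θ ^ n))) := by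
          rw [intervalIntegral.integral_sub ((cS.fun_add (continuous_const.fun_mul cM)).intervalIntegrable 0 π)
            ((continuous_const.fun_mul cC).intervalIntegrable 0 π),
            intervalIntegral.integral_add (cS.intervalIntegrable 0 π)
            ((continuous_const.fun_mul cM).intervalIntegrable 0 π),
            intervalIntegral.integral_const_mul, intervalIntegral.integral_const_mul,
            ← hS_def, ← hM_def, ← hC_def]
      _ = -(cos π * sin π ^ (n+1) * exp (l * cos π))
            - -(cos 0 * sin 0 ^ (n+1) * exp (l * cos 0)) :=
          intervalIntegral.integral_eq_sub_of_hasDerivAt hder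
            (Continuous.intervalIntegrable (by fun_prop) 0 π)
      _ = 0 := by simp
  -- Pythagorean identity
  have E3 : D - S - C = 0 := by
    have : D = S + C := by
      rw [hD_def, hS_def, hC_def, ← intervalIntegral.integral_add
        (cS.intervalIntegrable 0 π) (cC.intervalIntegrable 0 π)]
      apply intervalIntegral.integral_congr
      intro θ _
      simp only
      linear_combination (-(exp (l * cos θ) * sin θ ^ n)) * (Real.sin_sq_add_cos_sq θ)
    linarith
  have hNpos : 0 < N := by
    nlinarith [mul_pos hl hSpos, (by positivity : (0:ℝ) < (n : ℝ) + 1)]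
  -- Chebyshev correlation inequality via folding
  have fold : ∀ f : ℝ → ℝ, Continuous f →
      (∫ θ in (0:ℝ)..π, f θ) = ∫ θ in (0:ℝ)..π/2, (f θ + f (π - θ)) := by
    intro f hf
    have h2 : (∫ θ in (0:ℝ)..π/2, f (π - θ)) = ∫ θ in (π/2:ℝ)..π, f θ := by
      have h := intervalIntegral.integral_comp_sub_left (a := (0:ℝ)) (b := π/2) f π
      rw [show π - π/2 = π/2 by ring, sub_zero] at h
      exact h
    have hf2 : Continuous fun θ : ℝ => f (π - θ) := hf.comp (continuous_const.sub continuous_id)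
    rw [intervalIntegral.integral_add (hf.intervalIntegrable 0 (π/2))
      (hf2.intervalIntegrable 0 (π/2)), h2,
      intervalIntegral.integral_add_adjacent_intervals (hf.intervalIntegrable 0 (π/2))
      (hf.intervalIntegrable (π/2) π)]
  have Mineq : M * D < N * S := by
    have hDf : D = ∫ θ in (0:ℝ)..π/2, (2 * cosh (l * cos θ) * sin θ ^ n) := by
      rw [hD_def, fold _ cw]
      apply intervalIntegral.integral_congr
      intro θ _
      simp only [Real.cos_pi_sub, Real.sin_pi_sub, mul_neg, Real.cosh_eq]
      ring
    have hNf : N = ∫ θ in (0:ℝ)..π/2,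
        ((cos θ * (sinh (l * cos θ) / cosh (l * cos θ))) * (2 * cosh (l * cos θ) * sin θ ^ n)) := by
      rw [hN_def, fold _ cN]
      apply intervalIntegral.integral_congr
      intro θ _
      have hc := (Real.cosh_pos (l * cos θ)).ne'
      simp only [Real.cos_pi_sub, Real.sin_pi_sub, mul_neg, neg_mul]
      rw [Real.sinh_eq, Real.cosh_eq]
      field_simp
      ring
    have hSf : S = ∫ θ in (0:ℝ)..π/2,
        (sin θ ^ 2 * (2 * cosh (l * cos θ) * sin θ ^ n)) := by
      rw [hS_def, fold _ cS]
      apply intervalIntegral.integral_congr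
      intro θ _
      simp only [Real.cos_pi_sub, Real.sin_pi_sub, mul_neg, Real.cosh_eq]
      ring
    have hMf : M = ∫ θ in (0:ℝ)..π/2,
        ((cos θ * (sinh (l * cos θ) / cosh (l * cos θ))) * (sin θ ^ 2)
          * (2 * cosh (l * cos θ) * sin θ ^ n)) := by
      rw [hM_def, fold _ cM]
      apply intervalIntegral.integral_congr
      intro θ _
      have hc := (Real.cosh_pos (l * cos θ)).ne'
      simp only [Real.cos_pi_sub, Real.sin_pi_sub, mul_neg, neg_mul]
      rw [Real.sinh_eq, Real.cosh_eq]
      field_simp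
      ring
    rw [hDf, hNf, hSf, hMf]
    apply cheb_strict (u := fun θ => cos θ * (sinh (l * cos θ) / cosh (l * cos θ)))
      (v := fun θ => sin θ ^ 2) (ρ := fun θ => 2 * cosh (l * cos θ) * sin θ ^ n)
      (by positivity : (0:ℝ) < π/2)
    · exact continuous_cos.mul ((Real.continuous_sinh.comp (continuous_const.mul continuous_cos)).div
        (Real.continuous_cosh.comp (continuous_const.mul continuous_cos))
        (fun x => (Real.cosh_pos _).ne'))
    · fun_prop
    · fun_prop
    · intro x hx
      have hs := Real.sin_pos_of_pos_of_lt_pi hx.1 (hx.2.trans (by linarith [Real.pi_pos]))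
      positivity
    · intro x hx y hy hxy
      have hπ : π / 2 ≤ π := by linarith [Real.pi_pos]
      have hcy : 0 < cos y := Real.cos_pos_of_mem_Ioo ⟨by linarith [hy.1, Real.pi_pos], hy.2⟩
      have hcyx : cos y < cos x :=
        Real.cos_lt_cos_of_nonneg_of_le_pi hx.1.le (hy.2.le.trans hπ) hxy
      constructor
      · -- u strictly decreasing
        have hcx : 0 < cos x := lt_trans hcy hcyx
        have hdiv : sinh (l * cos y) / cosh (l * cos y)
            < sinh (l * cos x) / cosh (l * cos x) := by
          rw [div_lt_div_iff₀ (Real.cosh_pos _) (Real.cosh_pos _)]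
          have h5 : 0 < Real.sinh (l * cos x - l * cos y) :=
            Real.sinh_pos_iff.mpr (by nlinarith)
          rw [Real.sinh_sub] at h5
          linarith
        have hsy : 0 ≤ sinh (l * cos y) / cosh (l * cos y) :=
          div_nonneg (Real.sinh_pos_iff.mpr (by positivity)).le (Real.cosh_pos _).le
        exact mul_lt_mul'' hcyx hdiv hcy.le hsy
      · -- v strictly increasing
        have hsxy : sin x < sin y :=
          Real.sin_lt_sin_of_lt_of_le_pi_div_two (by linarith [hx.1, Real.pi_pos]) hy.2.le hxy
        have hsx : 0 ≤ sin x := (Real.sin_pos_of_pos_of_lt_pi hx.1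
          (hx.2.trans (by linarith [Real.pi_pos]))).le
        exact pow_lt_pow_left₀ hsxy hsx two_ne_zero
  -- algebra
  clear_value D N S M C
  clear hD_def hN_def hS_def hM_def hC_def cw cN cS cM cC fold hlam hμ
  have e4 : ((n : ℝ) + 1) * (l * (D^2 - N^2))
      = ((n : ℝ) + 2) * (l * S * D) + l^2 * (M * D - N * S) := by
    linear_combination (l * D * ((n : ℝ) + 1)) * E3 - (l * D) * E2 + (l * N) * E1
  have e5 : l^2 * (M * D - N * S) < 0 :=
    mul_neg_of_pos_of_neg (pow_pos hl 2) (sub_neg.mpr Mineq)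
  have h7 : ((n : ℝ) + 2) * (l * S * D) = ((n : ℝ) + 1) * (((n : ℝ) + 2) * N * D) := by
    linear_combination (((n : ℝ) + 2) * D) * E1
  have key : l * (D^2 - N^2) < ((n : ℝ) + 2) * N * D := by
    have h6 : ((n : ℝ) + 1) * (l * (D^2 - N^2)) < ((n : ℝ) + 1) * (((n : ℝ) + 2) * N * D) := by
      rw [e4, ← h7]; linarith
    exact lt_of_mul_lt_mul_left h6 (by positivity)
  -- conclude
  have hcast : ((2 + n : ℕ) : ℝ) = (n : ℝ) + 2 := by push_cast; ring
  rw [hcast]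
  have hr0 : 0 < Real.sqrt (((n : ℝ) + 2)^2 + 4 * l^2) := Real.sqrt_pos.mpr (by positivity)
  have hr2 : (Real.sqrt (((n : ℝ) + 2)^2 + 4 * l^2))^2 = ((n : ℝ) + 2)^2 + 4 * l^2 :=
    Real.sq_sqrt (by positivity)
  rw [div_lt_div_iff₀ (by positivity) hDpos]
  set r := Real.sqrt (((n : ℝ) + 2)^2 + 4 * l^2) with hr_def
  rcases le_or_gt (2 * l * D - ((n : ℝ) + 2) * N) 0 with h | h
  · nlinarith [mul_pos hNpos hr0]
  · have hsq : (2 * l * D - ((n : ℝ) + 2) * N)^2 < (N * r)^2 := by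
      have h8 := mul_lt_mul_of_pos_left key (by linarith : (0:ℝ) < 4 * l)
      rw [mul_pow, hr2]
      nlinarith [h8]
    have h9 := lt_of_pow_lt_pow_left₀ 2 (mul_pos hNpos hr0).le hsq
    linarith
end

section
/- For the von Mises–Fisher distribution M_{lΩ} on the sphere rS^{d-1} with l satisfying λ(l) = (σ/r²) l, the second moment in the direction Ω is ∫_{rS^{d-1}} (ω·Ω)² M_{lΩ}(ω) dω = r² − (d−1)σ. -/
open Real intervalIntegral

/-- For the von Mises–Fisher distribution `M_{lΩ}` on the sphere `rS^{d-1}` with `l > 0`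
satisfying `λ(l) = (σ/r²) l`, the second moment in the direction `Ω`, computed in
spherical coordinates, is `∫ (ω·Ω)² M_{lΩ}(ω) dω = r² − (d−1)σ`. -/
theorem vonMisesFisher_second_moment (d : ℕ) (hd : 2 ≤ d) (σ r : ℝ) (hσ : 0 < σ) (hr : 0 < r)
    (l : ℝ) (hl : 0 < l)
    (hfix : (∫ θ in (0:ℝ)..Real.pi,
        Real.cos θ * Real.exp (l * Real.cos θ) * Real.sin θ ^ (d - 2)) /
      (∫ θ in (0:ℝ)..Real.pi, Real.exp (l * Real.cos θ) * Real.sin θ ^ (d - 2)) =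
      σ / r ^ 2 * l) :
    (∫ θ in (0:ℝ)..Real.pi,
        (r * Real.cos θ) ^ 2 * Real.exp (l * Real.cos θ) * Real.sin θ ^ (d - 2)) /
      (∫ θ in (0:ℝ)..Real.pi, Real.exp (l * Real.cos θ) * Real.sin θ ^ (d - 2)) =
      r ^ 2 - ((d : ℝ) - 1) * σ := by
  obtain ⟨m, rfl⟩ : ∃ m, d = m + 2 := ⟨d - 2, by omega⟩
  simp only [Nat.add_sub_cancel] at hfix ⊢
  set I0 : ℝ := ∫ θ in (0:ℝ)..Real.pi, Real.exp (l * Real.cos θ) * Real.sin θ ^ m with hI0def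
  set I1 : ℝ := ∫ θ in (0:ℝ)..Real.pi,
      Real.cos θ * Real.exp (l * Real.cos θ) * Real.sin θ ^ m with hI1def
  have hc0 : Continuous fun θ : ℝ => Real.exp (l * Real.cos θ) * Real.sin θ ^ m := by
    continuity
  have hc1 : Continuous fun θ : ℝ =>
      Real.cos θ * Real.exp (l * Real.cos θ) * Real.sin θ ^ m := by continuity
  have hc2 : Continuous fun θ : ℝ => Real.exp (l * Real.cos θ) * Real.sin θ ^ (m + 2) := by
    continuity
  have hI0pos : 0 < I0 := by
    apply intervalIntegral.intervalIntegral_pos_of_pos_on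
      (hc0.intervalIntegrable 0 Real.pi)
    · intro x hx
      have hs : 0 < Real.sin x := Real.sin_pos_of_pos_of_lt_pi hx.1 hx.2
      positivity
    · exact Real.pi_pos
  -- integration by parts identity
  have key : l * (∫ θ in (0:ℝ)..Real.pi, Real.exp (l * Real.cos θ) * Real.sin θ ^ (m + 2))
      = ((m : ℝ) + 1) * I1 := by
    have hderiv : ∀ θ ∈ Set.uIcc (0:ℝ) Real.pi,
        HasDerivAt (fun x => -(Real.sin x ^ (m + 1) * Real.exp (l * Real.cos x)))
          ((fun θ => l * (Real.exp (l * Real.cos θ) * Real.sin θ ^ (m + 2))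
            - ((m : ℝ) + 1) * (Real.cos θ * Real.exp (l * Real.cos θ) * Real.sin θ ^ m)) θ)
          θ := by
      intro θ _
      have h1 : HasDerivAt (fun x => Real.sin x ^ (m + 1))
          (((m : ℝ) + 1) * Real.sin θ ^ m * Real.cos θ) θ := by
        have := (Real.hasDerivAt_sin θ).fun_pow (m + 1)
        simpa using this
      have h2 : HasDerivAt (fun x => Real.exp (l * Real.cos x))
          (Real.exp (l * Real.cos θ) * (l * -Real.sin θ)) θ :=
        ((Real.hasDerivAt_cos θ).const_mul l).exp
      have := (h1.fun_mul h2).fun_neg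
      refine this.congr_deriv ?_
      beta_reduce
      ring
    have hcont : Continuous fun θ : ℝ =>
        l * (Real.exp (l * Real.cos θ) * Real.sin θ ^ (m + 2))
          - ((m : ℝ) + 1) * (Real.cos θ * Real.exp (l * Real.cos θ) * Real.sin θ ^ m) := by
      continuity
    have heq := intervalIntegral.integral_eq_sub_of_hasDerivAt hderiv
      (hcont.intervalIntegrable 0 Real.pi)
    rw [intervalIntegral.integral_sub ((hc2.intervalIntegrable 0 Real.pi).const_mul l)
      ((hc1.intervalIntegrable 0 Real.pi).const_mul ((m : ℝ) + 1)),
      intervalIntegral.integral_const_mul, intervalIntegral.integral_const_mul] at heq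
    simp [Real.sin_pi] at heq
    linarith [heq]
  set I2 : ℝ := ∫ θ in (0:ℝ)..Real.pi, Real.exp (l * Real.cos θ) * Real.sin θ ^ (m + 2)
    with hI2def
  have hnum : (∫ θ in (0:ℝ)..Real.pi,
      (r * Real.cos θ) ^ 2 * Real.exp (l * Real.cos θ) * Real.sin θ ^ m)
      = r ^ 2 * I0 - r ^ 2 * I2 := by
    rw [hI0def, hI2def, ← intervalIntegral.integral_const_mul,
      ← intervalIntegral.integral_const_mul,
      ← intervalIntegral.integral_sub ((hc0.intervalIntegrable 0 Real.pi).const_mul (r ^ 2))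
        ((hc2.intervalIntegrable 0 Real.pi).const_mul (r ^ 2))]
    apply intervalIntegral.integral_congr
    intro θ _
    have hpyth := Real.sin_sq_add_cos_sq θ
    simp only []
    linear_combination (r ^ 2 * Real.exp (l * Real.cos θ) * Real.sin θ ^ m) * hpyth
  have hI1 : I1 = σ / r ^ 2 * l * I0 := by
    field_simp at hfix ⊢
    linarith [hfix]
  have hI2 : I2 = ((m : ℝ) + 1) * σ / r ^ 2 * I0 := by
    have hl' : l ≠ 0 := ne_of_gt hl
    rw [hI1] at key
    field_simp at key ⊢
    nlinarith [key]
  rw [hnum, hI2]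
  have hI0ne : I0 ≠ 0 := ne_of_gt hI0pos
  have hr2 : (r : ℝ) ^ 2 ≠ 0 := by positivity
  push_cast
  field_simp
  ring
end
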